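/- If G is a connected graph and d ≥ 2 an integer, then gp_d(G) ≥ ω(G_SR^d), where G_SR^d is the strong d-resolving graph of G. -/

import Mathlib

/-- `S` is a general `d`-position set of `G`: no three distinct vertices of `S`
lie on a common geodesic of length at most `d`. -/
def IsGenDPos {V : Type*} (G : SimpleGraph V) (d : ℕ) (S : Set V) : Prop :=
  ∀ ⦃u v w : V⦄, u ∈ S → v ∈ S → w ∈ S → u ≠ v → u ≠ w → v ≠ w →
    G.dist u v + G.dist v w = G.dist u w → G.dist u w ≤ d → False

/-- The general `d`-position number of `G`. -/
noncomputable def gpNum {V : Type*} (G : SimpleGraph V) (d : ℕ) : ℕ :=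
  sSup {n | ∃ S : Set V, IsGenDPos G d S ∧ S.ncard = n}

/-- u is maximally distant from v in G. -/
def MaxDistant {V : Type*} (G : SimpleGraph V) (u v : V) : Prop :=
  ∀ w, G.Adj u w → G.dist v w ≤ G.dist v u

/-- u and v are mutually maximally distant in G. -/
def MMD {V : Type*} (G : SimpleGraph V) (u v : V) : Prop :=
  MaxDistant G u v ∧ MaxDistant G v u

/-- The strong d-resolving graph of G. -/
def strongResolvingGraph {V : Type*} (G : SimpleGraph V) (d : ℕ) : SimpleGraph V where
  Adj u v := u ≠ v ∧ (MMD G u v ∨ d ≤ G.dist u v)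
  symm := by
    refine ⟨?_⟩
    rintro u v ⟨huv, h | h⟩
    · exact ⟨huv.symm, Or.inl ⟨h.2, h.1⟩⟩
    · exact ⟨huv.symm, Or.inr (by rwa [SimpleGraph.dist_comm])⟩
  loopless := by refine ⟨?_⟩; rintro u ⟨h, -⟩; exact h rfl


lemma clique_isGenDPos {V : Type*} (G : SimpleGraph V) (hG : G.Connected) (d : ℕ)
    {S : Set V} (hS : ((strongResolvingGraph G d)).IsClique S) : IsGenDPos G d S := by
  intro u v w hu hv hw huv huw hvw hsum hle
  have hvw' : 0 < G.dist v w := hG.pos_dist_of_ne hvw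
  -- find neighbor x of v on a geodesic to w
  obtain ⟨p, hp⟩ := (hG v w).exists_walk_length_eq_dist
  cases p with
  | nil => simp at hp; omega
  | cons h q =>
    rename_i x
    have hx : G.dist x w ≤ G.dist v w - 1 := by
      have := SimpleGraph.dist_le q
      simp [SimpleGraph.Walk.length_cons] at hp
      omega
    have hadj := hS hu hv huv
    rcases hadj.2 with hmmd | hbig
    · -- MMD u v: contradiction via neighbor x of v
      have h1 : G.dist u x ≤ G.dist u v := hmmd.2 x h
      have h2 : G.dist u w ≤ G.dist u x + G.dist x w := hG.dist_triangle
      omega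
    · -- d ≤ dist u v but dist u v < dist u w ≤ d
      omega

/-- gp_d(G) is at least the clique number of the strong d-resolving graph. -/
theorem stmt_11 {V : Type*} [Finite V] (G : SimpleGraph V) (hG : G.Connected)
    (d : ℕ) (hd : 2 ≤ d) :
    (strongResolvingGraph G d).cliqueNum ≤ gpNum G d := by
  have : Fintype V := Fintype.ofFinite V
  rw [SimpleGraph.cliqueNum]
  refine csSup_le ⟨0, (∅ : Finset V), SimpleGraph.isNClique_empty.mpr rfl⟩ ?_
  rintro n ⟨s, hs⟩
  apply le_csSup
  · refine ⟨Nat.card V, ?_⟩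
    rintro m ⟨S, -, rfl⟩
    simpa [Set.ncard_univ] using Set.ncard_le_ncard (Set.subset_univ S) Set.finite_univ
  · exact ⟨↑s, clique_isGenDPos G hG d hs.1, by rw [Set.ncard_coe_finset]; exact hs.2⟩
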